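/- arXiv:1910.05956 — 5 statements merged into one kernel-verified Lean document; each statement's English description precedes it below -/
import Mathlib

section
/- Let F : R → [0,1] be nondecreasing, concave on [0,∞), with F(0) = 1/2. Then for every ε ∈ [0, π/2], sup_{t ≥ 0}(F(t) − F(t cos ε)) ≤ ε²/4. -/
open Real

theorem stmt_6 (F : ℝ → ℝ) (hmono : Monotone F)
    (hrange : ∀ t, F t ∈ Set.Icc (0 : ℝ) 1) (h0 : F 0 = 1 / 2)
    (hconc : ConcaveOn ℝ (Set.Ici 0) F) :
    ∀ ε ∈ Set.Icc (0 : ℝ) (Real.pi / 2), ∀ t ≥ (0 : ℝ),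
      F t - F (t * Real.cos ε) ≤ ε ^ 2 / 4 := by
  intro ε hε t ht
  obtain ⟨hε0, hεpi⟩ := hε
  set c := Real.cos ε with hc
  have hc0 : 0 ≤ c := Real.cos_nonneg_of_mem_Icc ⟨by linarith [Real.pi_pos], hεpi⟩
  have hc1 : c ≤ 1 := Real.cos_le_one ε
  have hcos : 1 - c ≤ ε ^ 2 / 2 := by
    have := Real.one_sub_sq_div_two_le_cos (x := ε)
    linarith
  have hconc' := hconc.2 (Set.mem_Ici.2 (le_refl (0:ℝ))) (Set.mem_Ici.2 ht)
    (by linarith : (0:ℝ) ≤ 1 - c) hc0 (by ring)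
  simp only [smul_eq_mul, mul_zero, zero_add] at hconc'
  -- hconc' : (1-c) * F 0 + c * F t ≤ F (c * t)
  have hFt1 : F t ≤ 1 := (hrange t).2
  have key : F t - F (t * c) ≤ (1 - c) * (F t - 1/2) := by
    rw [mul_comm t c]
    nlinarith [hconc']
  nlinarith [key, hcos, hFt1]
end

section
/- Let p ∈ (0, 1) and let u, v ∈ R^d be Euclidean unit vectors. Then | ‖u‖_p/‖v‖_p − 1 | ≤ (d^{1/p − 1/2}/p) ‖u − v‖₂^p. -/
open Real

/-- Subadditivity of `x ↦ x ^ p` for `0 ≤ p ≤ 1` on nonnegative reals. -/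
lemma my_add_rpow_le {a b p : ℝ} (ha : 0 ≤ a) (hb : 0 ≤ b) (hp : 0 ≤ p) (hp1 : p ≤ 1) :
    (a + b) ^ p ≤ a ^ p + b ^ p := by
  have h := NNReal.rpow_add_le_add_rpow a.toNNReal b.toNNReal hp hp1
  have h' := (NNReal.coe_le_coe).2 h
  rw [NNReal.coe_rpow, NNReal.coe_add, NNReal.coe_add, NNReal.coe_rpow, NNReal.coe_rpow,
    Real.coe_toNNReal a ha, Real.coe_toNNReal b hb] at h'
  exact h'

lemma my_abs_rpow_sub_rpow {a b p : ℝ} (ha : 0 ≤ a) (hb : 0 ≤ b) (hp : 0 < p) (hp1 : p ≤ 1) :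
    |a ^ p - b ^ p| ≤ |a - b| ^ p := by
  wlog hab : b ≤ a generalizing a b
  · rw [abs_sub_comm, abs_sub_comm a b]; exact this hb ha (le_of_not_ge hab)
  have key : a ^ p ≤ (a - b) ^ p + b ^ p := by
    have heq : a = (a - b) + b := by ring
    calc a ^ p = ((a - b) + b) ^ p := by rw [← heq]
    _ ≤ (a - b) ^ p + b ^ p := my_add_rpow_le (by linarith) hb hp.le hp1
  rw [abs_of_nonneg (sub_nonneg.2 (Real.rpow_le_rpow hb hab hp.le)),
    abs_of_nonneg (sub_nonneg.2 hab)]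
  linarith

/-- Jensen-type inequality: `∑ cᵢ^q ≤ d^(1-q) (∑ cᵢ)^q` for `0 < q ≤ 1`. -/
lemma my_sum_rpow_le {d : ℕ} (hd : 0 < d) (c : Fin d → ℝ) (hc : ∀ i, 0 ≤ c i) {q : ℝ}
    (hq : 0 < q) (hq1 : q ≤ 1) :
    ∑ i, (c i) ^ q ≤ (d : ℝ) ^ (1 - q) * (∑ i, c i) ^ q := by
  have hdR : (0 : ℝ) < (d : ℝ) := by exact_mod_cast hd
  have h := Real.arith_mean_le_rpow_mean Finset.univ (fun _ => ((d : ℝ))⁻¹)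
    (fun i => (c i) ^ q) (fun i _ => by positivity) (by
      simp only [Finset.sum_const, Finset.card_univ, Fintype.card_fin, nsmul_eq_mul]
      field_simp) (fun i _ => Real.rpow_nonneg (hc i) q) (p := 1 / q)
      (by rw [le_div_iff₀ hq]; linarith)
  have hz : ∀ i : Fin d, ((c i) ^ q) ^ (1 / q) = c i := by
    intro i
    rw [← Real.rpow_mul (hc i), mul_one_div, div_self hq.ne', Real.rpow_one]
  rw [one_div_one_div] at h
  simp only [hz] at h
  rw [← Finset.mul_sum, ← Finset.mul_sum, Real.mul_rpow (by positivity)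
    (Finset.sum_nonneg fun i _ => hc i)] at h
  have hkey : (d : ℝ) * ((d : ℝ)⁻¹ ^ q) = (d : ℝ) ^ (1 - q) := by
    rw [Real.inv_rpow hdR.le, ← Real.rpow_neg hdR.le]
    nth_rewrite 1 [← Real.rpow_one (d : ℝ)]
    rw [← Real.rpow_add hdR]
    ring_nf
  calc ∑ i, (c i) ^ q = (d : ℝ) * ((d : ℝ)⁻¹ * ∑ i, (c i) ^ q) := by field_simp
  _ ≤ (d : ℝ) * ((d : ℝ)⁻¹ ^ q * (∑ i, c i) ^ q) := mul_le_mul_of_nonneg_left h hdR.le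
  _ = (d : ℝ) ^ (1 - q) * (∑ i, c i) ^ q := by rw [← mul_assoc, hkey]

theorem stmt_13 {d : ℕ} (p : ℝ) (hp : p ∈ Set.Ioo (0 : ℝ) 1)
    (u v : EuclideanSpace ℝ (Fin d)) (hu : ‖u‖ = 1) (hv : ‖v‖ = 1) :
    |(∑ i, |u i| ^ p) ^ (1 / p) / (∑ i, |v i| ^ p) ^ (1 / p) - 1| ≤
      ((d : ℝ) ^ (1 / p - 1 / 2) / p) * ‖u - v‖ ^ p := by
  obtain ⟨hp0, hp1⟩ := hp
  -- d is positive
  have hd : 0 < d := by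
    rcases Nat.eq_zero_or_pos d with h | h
    · subst h
      have : u = 0 := Subsingleton.elim u 0
      rw [this, norm_zero] at hu
      norm_num at hu
    · exact h
  have hdR : (0 : ℝ) < (d : ℝ) := by exact_mod_cast hd
  -- squared norms as sums
  have norm_sq : ∀ w : EuclideanSpace ℝ (Fin d), ∑ i, |w i| ^ (2 : ℝ) = ‖w‖ ^ (2 : ℕ) := by
    intro w
    have h1 : ‖w‖ = Real.sqrt (∑ i, ‖w i‖ ^ 2) := EuclideanSpace.norm_eq w
    have h2 : ∀ i : Fin d, |w i| ^ (2 : ℝ) = ‖w i‖ ^ (2 : ℕ) := by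
      intro i
      rw [Real.norm_eq_abs, ← Real.rpow_natCast |w i| 2]
      norm_num
    rw [Finset.sum_congr rfl fun i _ => h2 i, h1, Real.sq_sqrt]
    positivity
  set Su := ∑ i, |u i| ^ p with hSu_def
  set Sv := ∑ i, |v i| ^ p with hSv_def
  set M : ℝ := (d : ℝ) ^ (1 - p / 2) with hM_def
  have hM1 : 1 ≤ M := Real.one_le_rpow (by exact_mod_cast hd) (by linarith)
  have hM0 : 0 < M := lt_of_lt_of_le one_pos hM1
  -- lower bounds : 1 ≤ Su, 1 ≤ Sv
  have lower : ∀ w : EuclideanSpace ℝ (Fin d), ‖w‖ = 1 → 1 ≤ ∑ i, |w i| ^ p := by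
    intro w hw
    have hterm : ∀ i : Fin d, |w i| ^ (2 : ℝ) ≤ |w i| ^ p := by
      intro i
      rcases eq_or_lt_of_le (abs_nonneg (w i)) with h0 | h0
      · rw [← h0, Real.zero_rpow (by norm_num : (2:ℝ) ≠ 0), Real.zero_rpow hp0.ne']
      · have hle1 : |w i| ≤ 1 := by
          have hs := norm_sq w
          rw [hw, one_pow] at hs
          have h2 : |w i| ^ (2:ℝ) ≤ 1 := by
            rw [← hs]
            exact Finset.single_le_sum (f := fun j => |w j| ^ (2:ℝ))
              (fun j _ => Real.rpow_nonneg (abs_nonneg _) _) (Finset.mem_univ i)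
          have hc2 : ((2:ℕ):ℝ) = (2:ℝ) := by norm_num
          have h3 : |w i| ^ (2:ℕ) ≤ 1 := by
            rw [← Real.rpow_natCast |w i| 2, hc2]; exact h2
          exact (pow_le_one_iff_of_nonneg (abs_nonneg _) two_ne_zero).mp h3
        exact Real.rpow_le_rpow_of_exponent_ge h0 hle1 (by linarith)
    calc (1:ℝ) = ‖w‖ ^ (2:ℕ) := by rw [hw]; norm_num
    _ = ∑ i, |w i| ^ (2:ℝ) := (norm_sq w).symm
    _ ≤ ∑ i, |w i| ^ p := Finset.sum_le_sum fun i _ => hterm i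
  have hSu1 : 1 ≤ Su := lower u hu
  have hSv1 : 1 ≤ Sv := lower v hv
  -- upper bounds : Su ≤ M, Sv ≤ M
  have upper : ∀ w : EuclideanSpace ℝ (Fin d), ‖w‖ = 1 → ∑ i, |w i| ^ p ≤ M := by
    intro w hw
    have h := my_sum_rpow_le hd (fun i => |w i| ^ (2:ℝ)) (fun i => Real.rpow_nonneg (abs_nonneg _) _)
      (q := p / 2) (by linarith) (by linarith)
    have hterm : ∀ i : Fin d, (|w i| ^ (2:ℝ)) ^ (p/2 : ℝ) = |w i| ^ p := by
      intro i
      rw [← Real.rpow_mul (abs_nonneg _)]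
      congr 1
      ring
    rw [Finset.sum_congr rfl fun i _ => hterm i] at h
    rw [norm_sq w, hw] at h
    simpa using h
  have hSuM : Su ≤ M := upper u hu
  have hSvM : Sv ≤ M := upper v hv
  -- |Su - Sv| ≤ M * ‖u - v‖ ^ p
  have hdiff : |Su - Sv| ≤ M * ‖u - v‖ ^ p := by
    have step1 : |Su - Sv| ≤ ∑ i, |u i - v i| ^ p := by
      have h1 : Su - Sv = ∑ i, (|u i| ^ p - |v i| ^ p) := by
        rw [hSu_def, hSv_def, ← Finset.sum_sub_distrib]
      rw [h1]
      refine le_trans (Finset.abs_sum_le_sum_abs _ _) (Finset.sum_le_sum fun i _ => ?_)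
      refine le_trans (my_abs_rpow_sub_rpow (abs_nonneg _) (abs_nonneg _) hp0 hp1.le) ?_
      exact Real.rpow_le_rpow (abs_nonneg _) (abs_abs_sub_abs_le_abs_sub _ _) hp0.le
    have step2 : ∑ i, |u i - v i| ^ p ≤ M * ‖u - v‖ ^ p := by
      have h := my_sum_rpow_le hd (fun i => |u i - v i| ^ (2:ℝ))
        (fun i => Real.rpow_nonneg (abs_nonneg _) _) (q := p / 2) (by linarith) (by linarith)
      have hterm : ∀ i : Fin d, (|u i - v i| ^ (2:ℝ)) ^ (p/2 : ℝ) = |u i - v i| ^ p := by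
        intro i
        rw [← Real.rpow_mul (abs_nonneg _)]
        congr 1
        ring
      rw [Finset.sum_congr rfl fun i _ => hterm i] at h
      have hsum : ∑ i, |u i - v i| ^ (2:ℝ) = ‖u - v‖ ^ (2:ℕ) := by
        have := norm_sq (u - v)
        simp only [PiLp.sub_apply] at this ⊢
        exact this
      rw [hsum] at h
      have hpow : (‖u - v‖ ^ (2:ℕ)) ^ (p/2 : ℝ) = ‖u - v‖ ^ p := by
        rw [← Real.rpow_natCast ‖u - v‖ 2, ← Real.rpow_mul (norm_nonneg _)]
        congr 1
        push_cast
        ring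
      rw [hpow] at h
      exact h
    exact le_trans step1 step2
  -- the ratio x = Su / Sv lies in [M⁻¹, M]
  set x := Su / Sv with hx_def
  have hSv0 : (0:ℝ) < Sv := lt_of_lt_of_le one_pos hSv1
  have hxM : x ≤ M := by
    rw [hx_def, div_le_iff₀ hSv0]
    nlinarith
  have hxMinv : M⁻¹ ≤ x := by
    rw [hx_def, le_div_iff₀ hSv0, inv_mul_le_iff₀ hM0]
    nlinarith
  -- MVT on [M⁻¹, M]
  set C : ℝ := (1 / p) * M ^ (1/p - 1) with hC_def
  have hMinv_pos : (0:ℝ) < M⁻¹ := by positivity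
  have mvt : |x ^ (1/p : ℝ) - 1| ≤ C * |x - 1| := by
    have hconv : Convex ℝ (Set.Icc (M⁻¹) M) := convex_Icc _ _
    have hder : ∀ t ∈ Set.Icc (M⁻¹) M,
        HasDerivWithinAt (fun s : ℝ => s ^ (1/p : ℝ)) ((1/p) * t ^ (1/p - 1)) (Set.Icc (M⁻¹) M) t := by
      intro t ht
      have ht0 : (0:ℝ) < t := lt_of_lt_of_le hMinv_pos ht.1
      exact (Real.hasDerivAt_rpow_const (Or.inl ht0.ne')).hasDerivWithinAt
    have hbound : ∀ t ∈ Set.Icc (M⁻¹) M, ‖(1/p) * t ^ (1/p - 1)‖ ≤ C := by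
      intro t ht
      have ht0 : (0:ℝ) < t := lt_of_lt_of_le hMinv_pos ht.1
      rw [Real.norm_eq_abs, abs_of_nonneg (by positivity)]
      rw [hC_def]
      have : t ^ (1/p - 1 : ℝ) ≤ M ^ (1/p - 1 : ℝ) := by
        apply Real.rpow_le_rpow ht0.le ht.2
        have : 1 ≤ 1/p := by rw [le_div_iff₀ hp0]; linarith
        linarith
      have hp' : (0:ℝ) < 1/p := by positivity
      nlinarith
    have hx_mem : x ∈ Set.Icc (M⁻¹) M := ⟨hxMinv, hxM⟩
    have h1_mem : (1:ℝ) ∈ Set.Icc (M⁻¹) M := ⟨by rw [inv_le_one_iff₀]; right; exact hM1, hM1⟩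
    have := hconv.norm_image_sub_le_of_norm_hasDerivWithin_le hder hbound h1_mem hx_mem
    simpa [Real.one_rpow] using this
  -- assemble
  have hratio : (∑ i, |u i| ^ p) ^ (1 / p) / (∑ i, |v i| ^ p) ^ (1 / p) = x ^ (1/p : ℝ) := by
    rw [hx_def, Real.div_rpow (by positivity) hSv0.le]
  rw [hratio]
  have hx1 : |x - 1| ≤ M * ‖u - v‖ ^ p := by
    have heq : x - 1 = (Su - Sv) / Sv := by
      rw [hx_def]; field_simp
    rw [heq, abs_div, abs_of_pos hSv0]
    calc |Su - Sv| / Sv ≤ |Su - Sv| / 1 := by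
          apply div_le_div_of_nonneg_left (abs_nonneg _) one_pos hSv1
          -- fallback handled below
    _ = |Su - Sv| := div_one _
    _ ≤ M * ‖u - v‖ ^ p := hdiff
  have final : C * (M * ‖u - v‖ ^ p) = ((d : ℝ) ^ (1 / p - 1 / 2) / p) * ‖u - v‖ ^ p := by
    have hCM : C * M = (d : ℝ) ^ (1 / p - 1 / 2) / p := by
      rw [hC_def, hM_def]
      have h1 : ((d:ℝ) ^ (1 - p/2 : ℝ)) ^ (1/p - 1 : ℝ) * (d:ℝ) ^ (1 - p/2 : ℝ) =
          (d:ℝ) ^ (1/p - 1/2 : ℝ) := by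
        rw [← Real.rpow_mul hdR.le, ← Real.rpow_add hdR]
        congr 1
        field_simp
        ring
      calc (1/p) * ((d:ℝ) ^ (1 - p/2 : ℝ)) ^ (1/p - 1 : ℝ) * (d:ℝ) ^ (1 - p/2 : ℝ)
          = (1/p) * (((d:ℝ) ^ (1 - p/2 : ℝ)) ^ (1/p - 1 : ℝ) * (d:ℝ) ^ (1 - p/2 : ℝ)) := by ring
      _ = (1/p) * (d:ℝ) ^ (1/p - 1/2 : ℝ) := by rw [h1]
      _ = (d : ℝ) ^ (1 / p - 1 / 2) / p := by ring
    calc C * (M * ‖u - v‖ ^ p) = (C * M) * ‖u - v‖ ^ p := by ring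
    _ = ((d : ℝ) ^ (1 / p - 1 / 2) / p) * ‖u - v‖ ^ p := by rw [hCM]
  have hC0 : 0 ≤ C := by
    rw [hC_def]; positivity
  calc |x ^ (1/p : ℝ) - 1| ≤ C * |x - 1| := mvt
  _ ≤ C * (M * ‖u - v‖ ^ p) := mul_le_mul_of_nonneg_left hx1 hC0
  _ = ((d : ℝ) ^ (1 / p - 1 / 2) / p) * ‖u - v‖ ^ p := final
end

section
/- Let c : [0, ∞] → [0, 1] be continuous, bijective, strictly decreasing on [0, ∞], with c(∞) = 0. Then the minimal multiplicative modulus of continuity ζ(τ) = sup_{t > 0}(c(τt) − c(t)) satisfies ζ(τₙ) → 0 for any sequence τₙ ↑ 1 from the left; in particular ζ is continuous from the left at τ = 1 with limit 0. -/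
open Filter
open scoped ENNReal

theorem stmt_15 (c : ℝ≥0∞ → ℝ) (hc : Continuous c) (hanti : StrictAnti c)
    (hbij : Set.BijOn c Set.univ (Set.Icc 0 1)) (htop : c ⊤ = 0)
    (τ : ℕ → ℝ≥0∞) (hmono : Monotone τ) (hlt : ∀ n, 0 < τ n ∧ τ n < 1)
    (hlim : Tendsto τ atTop (nhds 1)) :
    Tendsto (fun n => ⨆ t : {t : ℝ≥0∞ // 0 < t}, (c (τ n * t) - c t))
      atTop (nhds 0) := by
  have hne : Nonempty {t : ℝ≥0∞ // 0 < t} := ⟨⟨1, zero_lt_one⟩⟩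
  -- truncation
  set σ : ℝ≥0∞ → ℝ≥0∞ := fun s => max (min s 1) 2⁻¹ with hσ
  have hσcont : Continuous σ := ((continuous_id.min continuous_const).max continuous_const)
  have hσ1 : ∀ s, σ s ≤ 1 := by
    intro s
    simp only [hσ, max_le_iff, min_le_iff]
    exact ⟨Or.inr le_rfl, by norm_num⟩
  have hσ0 : ∀ s, σ s ≠ 0 := by
    intro s
    have : (2⁻¹ : ℝ≥0∞) ≤ σ s := le_max_right _ _
    intro h; rw [h] at this; simp at this
  have hG : Continuous fun p : ℝ≥0∞ × ℝ≥0∞ => c (σ p.1 * p.2) - c p.2 := by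
    refine ((hc.comp ?_).sub (hc.comp continuous_snd))
    exact Continuous.ennreal_mul (hσcont.comp continuous_fst) continuous_snd
      (fun p => Or.inl (hσ0 _)) (fun p => Or.inr (ne_top_of_le_ne_top ENNReal.one_ne_top (hσ1 _)))
  rw [NormedAddCommGroup.tendsto_nhds_zero]
  intro ε hε
  -- tube lemma
  set U : Set (ℝ≥0∞ × ℝ≥0∞) := {p | c (σ p.1 * p.2) - c p.2 < ε / 2} with hU
  have hUopen : IsOpen U := isOpen_lt hG continuous_const
  have hsub : ({1} : Set ℝ≥0∞) ×ˢ (Set.univ : Set ℝ≥0∞) ⊆ U := by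
    rintro ⟨s, t⟩ ⟨hs, -⟩
    simp only [Set.mem_singleton_iff] at hs
    have : σ s = 1 := by simp [hσ, hs]
    simp [hU, this, half_pos hε]
  obtain ⟨u, v, huo, hvo, h1u, huniv, huv⟩ :=
    generalized_tube_lemma isCompact_singleton isCompact_univ hUopen hsub
  -- eventually τ n ∈ u and τ n ≥ 2⁻¹
  have hev1 : ∀ᶠ n in atTop, τ n ∈ u := hlim (huo.mem_nhds (h1u rfl))
  have hev2 : ∀ᶠ n in atTop, (2⁻¹ : ℝ≥0∞) ≤ τ n := by
    have : Set.Ioi (2⁻¹ : ℝ≥0∞) ∈ nhds (1 : ℝ≥0∞) := by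
      refine Ioi_mem_nhds ?_
      norm_num
    filter_upwards [hlim this] with n hn using le_of_lt hn
  filter_upwards [hev1, hev2] with n hn1 hn2
  have hστ : σ (τ n) = τ n := by
    have h1 : min (τ n) 1 = τ n := min_eq_left (hlt n).2.le
    simp [hσ, h1, max_eq_left hn2]
  -- each term nonneg and < ε/2
  have hlow : ∀ t : {t : ℝ≥0∞ // 0 < t}, (0:ℝ) ≤ c (τ n * t) - c t := by
    intro t
    have : τ n * t ≤ t := by
      calc τ n * t ≤ 1 * t := mul_le_mul_left (hlt n).2.le _
      _ = t := one_mul _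
    linarith [hanti.antitone this]
  have hupp : ∀ t : {t : ℝ≥0∞ // 0 < t}, c (τ n * (t:ℝ≥0∞)) - c t < ε / 2 := by
    intro t
    have := huv (show ((τ n, (t:ℝ≥0∞)) : ℝ≥0∞ × ℝ≥0∞) ∈ u ×ˢ v from ⟨hn1, huniv trivial⟩)
    rw [hU, Set.mem_setOf_eq, hστ] at this
    exact this
  have hbdd : (⨆ t : {t : ℝ≥0∞ // 0 < t}, (c (τ n * t) - c t)) ≤ ε / 2 :=
    ciSup_le fun t => (hupp t).le
  have hlow' : (0:ℝ) ≤ ⨆ t : {t : ℝ≥0∞ // 0 < t}, (c (τ n * t) - c t) := by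
    refine le_trans (hlow ⟨1, zero_lt_one⟩) (le_ciSup (f := fun t : {t : ℝ≥0∞ // 0 < t} => c (τ n * t) - c t) ⟨ε/2, ?_⟩ ⟨1, zero_lt_one⟩)
    rintro x ⟨t, rfl⟩
    exact (hupp t).le
  rw [Real.norm_eq_abs, abs_of_nonneg hlow']
  linarith
end

section
/- For c(x) = 1/(1 + (x₊)^k) with a positive integer k, where x₊ = max(x, 0), the minimal multiplicative modulus of continuity ζ(τ) = sup_{t > 0}(c(τt) − c(t)) equals (1 − τ^{k/2})/(1 + τ^{k/2}) for every τ ∈ (0, 1). -/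
open Real

theorem stmt_16 (k : ℕ) (hk : 0 < k) (τ : ℝ) (hτ : τ ∈ Set.Ioo (0 : ℝ) 1) :
    IsLUB {y : ℝ | ∃ t > (0 : ℝ), y = 1 / (1 + (τ * t) ^ k) - 1 / (1 + t ^ k)}
      ((1 - τ ^ ((k : ℝ) / 2)) / (1 + τ ^ ((k : ℝ) / 2))) := by
  obtain ⟨hτ0, hτ1⟩ := hτ
  set s := τ ^ ((k : ℝ) / 2) with hsdef
  have hs0 : 0 < s := Real.rpow_pos_of_pos hτ0 _
  have hs1 : s < 1 := Real.rpow_lt_one hτ0.le hτ1 (by positivity)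
  have hssq : s * s = τ ^ k := by
    rw [hsdef, ← Real.rpow_natCast τ k, ← Real.rpow_add hτ0]
    norm_num
  constructor
  · rintro y ⟨t, ht, rfl⟩
    have hu : 0 < t ^ k := pow_pos ht k
    rw [mul_pow, ← hssq]
    set u := t ^ k with hudef
    have h1 : (0:ℝ) < 1 + s * s * u := by nlinarith
    have h2 : (0:ℝ) < 1 + u := by linarith
    have h3 : (0:ℝ) < 1 + s := by linarith
    rw [div_sub_div _ _ (by positivity) (by positivity),
      div_le_div_iff₀ (by positivity) h3]
    nlinarith [sq_nonneg (1 - s * u), mul_pos h1 h2]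
  · intro b hb
    apply hb
    refine ⟨τ ^ (-(1:ℝ)/2), Real.rpow_pos_of_pos hτ0 _, ?_⟩
    have h1 : (τ ^ (-(1:ℝ)/2)) ^ k = s⁻¹ := by
      rw [← Real.rpow_natCast (τ ^ (-(1:ℝ)/2)) k, ← Real.rpow_mul hτ0.le,
        hsdef, ← Real.rpow_neg hτ0.le]
      ring_nf
    have h2 : (τ * τ ^ (-(1:ℝ)/2)) ^ k = s := by
      have : τ * τ ^ (-(1:ℝ)/2) = τ ^ ((1:ℝ)/2) := by
        nth_rewrite 1 [← Real.rpow_one τ]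
        rw [← Real.rpow_add hτ0]; norm_num
      rw [this, ← Real.rpow_natCast (τ ^ ((1:ℝ)/2)) k, ← Real.rpow_mul hτ0.le, hsdef]
      ring_nf
    rw [h1, h2]
    have h3 : (0:ℝ) < 1 + s := by linarith
    field_simp
    ring
end

section
/- Let P be a probability distribution on R^d with density bounded above by M > 0 vanishing outside a bounded set C of diameter r. Then for all x ∈ C and unit vectors u, v, |P(⟨u, X⟩ ≤ ⟨u, x⟩) − P(⟨v, X⟩ ≤ ⟨v, x⟩)| ≤ L·arccos(⟨u, v⟩), with L = M π^{d/2−1} r^d / Γ(d/2 + 1). -/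
/-!
For unit vectors `u, v` at angle `θ = arccos ⟪u, v⟫`, the two half-spaces through `x` differ by
two wedges with apex `x` and opening angle `θ`. All the mass lies in the ball of radius `r`
around `x`, and a wedge fills at most the fraction `θ / (2π)` of that ball: averaging over the
rotations of the plane of `u` and `v`, every point of the ball spends an angle of at most `θ`
inside the wedge. With density at most `M`, each wedge carries mass at most
`M θ vol(B_r) / (2π)`, which is below the claimed bound.
-/

open Real MeasureTheory Set
open scoped RealInnerProductSpace ENNReal

lemma volume_arc_inter_Ioc_le {θ : ℝ} (hθ : 0 ≤ θ) (c : ℝ) :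
    volume ({t | cos t ≤ 0 ∧ 0 < cos (t - θ)} ∩ Ioc c (c + 2 * π)) ≤ ENNReal.ofReal θ := by
  have hmeas : MeasurableSet {t | cos t ≤ 0 ∧ 0 < cos (t - θ)} :=
    (measurableSet_le continuous_cos.measurable measurable_const).inter
      (measurableSet_lt measurable_const (continuous_cos.comp (continuous_sub_right θ)).measurable)
  have hperiodic : ∀ g : AddSubgroup.zmultiples (2 * π),
      (g +ᵥ ·) ⁻¹' {t | cos t ≤ 0 ∧ 0 < cos (t - θ)} = {t | cos t ≤ 0 ∧ 0 < cos (t - θ)} := by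
    rintro ⟨g, hg⟩
    obtain ⟨k, rfl⟩ := AddSubgroup.mem_zmultiples_iff.mp hg
    ext t
    simp only [mem_preimage, mem_ofPred_eq, AddSubgroup.vadd_def, vadd_eq_add, zsmul_eq_mul,
      add_comm (k * (2 * π)), cos_add_int_mul_two_pi, add_sub_right_comm t]
  have h2π : 0 < 2 * π := by positivity
  have hwindow : {t | cos t ≤ 0 ∧ 0 < cos (t - θ)} ∩ Ioc (-(π / 2)) (-(π / 2) + 2 * π) ⊆
      Ico (π / 2) (π / 2 + θ) := by
    rintro t ⟨⟨hcos, hcos_sub⟩, hlo, hhi⟩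
    constructor
    · by_contra! h
      linarith [cos_pos_of_mem_Ioo ⟨hlo, h⟩]
    · by_contra! h
      linarith [cos_nonpos_of_pi_div_two_le_of_le (x := t - θ) (by linarith) (by linarith)]
  calc _ = volume ({t | cos t ≤ 0 ∧ 0 < cos (t - θ)} ∩ Ioc (-(π / 2)) (-(π / 2) + 2 * π)) :=
        (isAddFundamentalDomain_Ioc h2π c (μ := volume)).measure_set_eq
          (isAddFundamentalDomain_Ioc h2π _) hmeas hperiodic
    _ ≤ volume (Ico (π / 2) (π / 2 + θ)) := measure_mono hwindow
    _ = ENNReal.ofReal θ := by rw [volume_Ico, add_sub_cancel_left]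

lemma volume_sinusoid_arc_le {θ : ℝ} (hθ : 0 ≤ θ) (a b : ℝ) :
    volume ({t | cos t * a - sin t * b ≤ 0 ∧ 0 < cos (t - θ) * a - sin (t - θ) * b} ∩
      Ioc 0 (2 * π)) ≤ ENNReal.ofReal θ := by
  set z : ℂ := ⟨a, b⟩
  have hre : ‖z‖ * cos z.arg = a := Complex.norm_mul_cos_arg z
  have him : ‖z‖ * sin z.arg = b := Complex.norm_mul_sin_arg z
  have hpolar : ∀ s, cos s * a - sin s * b = ‖z‖ * cos (s + z.arg) := fun s => by
    rw [cos_add]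
    linear_combination -cos s * hre + sin s * him
  have hsub : {t | cos t * a - sin t * b ≤ 0 ∧ 0 < cos (t - θ) * a - sin (t - θ) * b} ∩
      Ioc 0 (2 * π) ⊆ (· + z.arg) ⁻¹'
        ({s | cos s ≤ 0 ∧ 0 < cos (s - θ)} ∩ Ioc z.arg (z.arg + 2 * π)) := by
    rintro t ⟨⟨hle, hlt⟩, ht0, ht2π⟩
    rw [hpolar] at hle
    rw [hpolar, sub_add_eq_add_sub] at hlt
    have hcos_sub : 0 < cos (t + z.arg - θ) := pos_of_mul_pos_right hlt (norm_nonneg z)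
    have hz : 0 < ‖z‖ := pos_of_mul_pos_left hlt hcos_sub.le
    exact ⟨⟨nonpos_of_mul_nonpos_right hle hz, hcos_sub⟩, by linarith, by linarith⟩
  calc _ ≤ _ := measure_mono hsub
    _ = _ := measure_preimage_add_right _ _ _
    _ ≤ _ := volume_arc_inter_Ioc_le hθ _

lemma lintegral_volume_setOf_mem_inter_Ioc {X : Type*} [MeasurableSpace X] {ν : Measure X}
    [SFinite ν] {R : ℝ → X → X} (hR : Measurable (Function.uncurry R))
    (hR_pres : ∀ φ, MeasurePreserving (R φ) ν ν) {W : Set X} (hW : MeasurableSet W) (a b : ℝ) :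
    ∫⁻ z, volume ({φ | R φ z ∈ W} ∩ Ioc a b) ∂ν = ENNReal.ofReal (b - a) * ν W := by
  have hS : MeasurableSet (Function.uncurry R ⁻¹' W) := hR hW
  calc ∫⁻ z, volume ({φ | R φ z ∈ W} ∩ Ioc a b) ∂ν
      = ((volume.restrict (Ioc a b)).prod ν) (Function.uncurry R ⁻¹' W) := by
        rw [Measure.prod_apply_symm hS]
        refine lintegral_congr fun z => ?_
        rw [Measure.restrict_apply' measurableSet_Ioc]
        rfl
    _ = ∫⁻ _ in Ioc a b, ν W := by
        rw [Measure.prod_apply hS]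
        exact lintegral_congr fun φ => (hR_pres φ).measure_preimage hW.nullMeasurableSet
    _ = ENNReal.ofReal (b - a) * ν W := by rw [setLIntegral_const, volume_Ioc, mul_comm]

section PlaneRotation

variable {F : Type*} [NormedAddCommGroup F] [InnerProductSpace ℝ F]

noncomputable def planeRotation (u w : F) (φ : ℝ) : F →ₗ[ℝ] F :=
  LinearMap.id
    + (((cos φ - 1) • innerₗ F u - sin φ • innerₗ F w).smulRight u)
    + ((sin φ • innerₗ F u + (cos φ - 1) • innerₗ F w).smulRight w)

lemma planeRotation_apply (u w : F) (φ : ℝ) (z : F) :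
    planeRotation u w φ z = z + ((cos φ - 1) * ⟪u, z⟫ - sin φ * ⟪w, z⟫) • u
      + (sin φ * ⟪u, z⟫ + (cos φ - 1) * ⟪w, z⟫) • w := by
  simp [planeRotation, LinearMap.smulRight_apply, smul_eq_mul]

variable {u w : F}

lemma inner_planeRotation_left (hu : ‖u‖ = 1) (huw : ⟪u, w⟫ = 0) (φ : ℝ) (z : F) :
    ⟪u, planeRotation u w φ z⟫ = cos φ * ⟪u, z⟫ - sin φ * ⟪w, z⟫ := by
  simp only [planeRotation_apply, inner_add_right, real_inner_smul_right,
    real_inner_self_eq_norm_sq, hu, huw]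
  ring

lemma inner_planeRotation_right (hw : ‖w‖ = 1) (huw : ⟪u, w⟫ = 0) (φ : ℝ) (z : F) :
    ⟪w, planeRotation u w φ z⟫ = sin φ * ⟪u, z⟫ + cos φ * ⟪w, z⟫ := by
  simp only [planeRotation_apply, inner_add_right, real_inner_smul_right,
    real_inner_self_eq_norm_sq, hw, real_inner_comm u w ▸ huw]
  ring

lemma norm_planeRotation (hu : ‖u‖ = 1) (hw : ‖w‖ = 1) (huw : ⟪u, w⟫ = 0) (φ : ℝ) (z : F) :
    ‖planeRotation u w φ z‖ = ‖z‖ := by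
  have huu : ⟪u, u⟫ = 1 := by rw [real_inner_self_eq_norm_sq, hu, one_pow]
  have hww : ⟪w, w⟫ = 1 := by rw [real_inner_self_eq_norm_sq, hw, one_pow]
  have hwu : ⟪w, u⟫ = 0 := real_inner_comm u w ▸ huw
  have hinner : ⟪planeRotation u w φ z, planeRotation u w φ z⟫ = ⟪z, z⟫ := by
    simp only [planeRotation_apply, inner_add_left, inner_add_right, real_inner_smul_left,
      real_inner_smul_right, huu, hww, huw, hwu,
      real_inner_comm u z, real_inner_comm w z]
    linear_combination (⟪u, z⟫ ^ 2 + ⟪w, z⟫ ^ 2) * sin_sq_add_cos_sq φ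
  rw [norm_eq_sqrt_real_inner, hinner, ← norm_eq_sqrt_real_inner]

lemma continuous_planeRotation_uncurry (u w : F) :
    Continuous fun p : ℝ × F => planeRotation u w p.1 p.2 := by
  simp only [planeRotation_apply]
  fun_prop

variable [FiniteDimensional ℝ F]

noncomputable def planeRotationEquiv (hu : ‖u‖ = 1) (hw : ‖w‖ = 1) (huw : ⟪u, w⟫ = 0) (φ : ℝ) :
    F ≃ₗᵢ[ℝ] F :=
  LinearIsometry.toLinearIsometryEquiv ⟨planeRotation u w φ, norm_planeRotation hu hw huw φ⟩ rfl

@[simp]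
lemma planeRotationEquiv_apply (hu : ‖u‖ = 1) (hw : ‖w‖ = 1) (huw : ⟪u, w⟫ = 0) (φ : ℝ) (z : F) :
    planeRotationEquiv hu hw huw φ z = planeRotation u w φ z :=
  rfl

end PlaneRotation

section Wedge

variable {F : Type*} [NormedAddCommGroup F] [InnerProductSpace ℝ F]

def wedge (u v : F) : Set F := {z | ⟪u, z⟫ ≤ 0 ∧ 0 < ⟪v, z⟫}

variable [MeasurableSpace F] [BorelSpace F]

lemma measurableSet_wedge (u v : F) : MeasurableSet (wedge u v) := by
  rw [wedge, ofPred_and]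
  exact (measurableSet_le (by fun_prop) (by fun_prop)).inter
    (measurableSet_lt (by fun_prop) (by fun_prop))

variable [FiniteDimensional ℝ F]

lemma two_pi_mul_volume_closedBall_inter_wedge_le_of_orthonormal {u w : F} (hu : ‖u‖ = 1)
    (hw : ‖w‖ = 1) (huw : ⟪u, w⟫ = 0) {θ : ℝ} (hθ : 0 ≤ θ) (ρ : ℝ) :
    ENNReal.ofReal (2 * π) * volume (Metric.closedBall (0 : F) ρ ∩ wedge u (cos θ • u + sin θ • w))
      ≤ ENNReal.ofReal θ * volume (Metric.closedBall (0 : F) ρ) := by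
  set K := Metric.closedBall (0 : F) ρ
  set W := K ∩ wedge u (cos θ • u + sin θ • w)
  set rot := planeRotationEquiv hu hw huw
  have hrot_v : ∀ φ z, ⟪cos θ • u + sin θ • w, rot φ z⟫ =
      cos (φ - θ) * ⟪u, z⟫ - sin (φ - θ) * ⟪w, z⟫ := fun φ z => by
    rw [planeRotationEquiv_apply, inner_add_left, real_inner_smul_left, real_inner_smul_left,
      inner_planeRotation_left hu huw, inner_planeRotation_right hw huw, cos_sub, sin_sub]
    ring
  have hfiber : ∀ z, volume ({φ | rot φ z ∈ W} ∩ Ioc 0 (2 * π)) ≤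
      K.indicator (fun _ => ENNReal.ofReal θ) z := fun z => by
    by_cases hz : z ∈ K
    · rw [indicator_of_mem hz]
      refine (measure_mono ?_).trans (volume_sinusoid_arc_le hθ ⟪u, z⟫ ⟪w, z⟫)
      rintro φ ⟨⟨-, hu_nonpos, hv_pos⟩, hφ⟩
      refine ⟨⟨?_, (hrot_v φ z).symm ▸ hv_pos⟩, hφ⟩
      rwa [planeRotationEquiv_apply, inner_planeRotation_left hu huw] at hu_nonpos
    · have hempty : {φ | rot φ z ∈ W} = ∅ := eq_empty_of_forall_notMem fun φ hφ =>
        hz (by simpa [K, (rot φ).norm_map] using hφ.1)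
      simp [hempty, indicator_of_notMem hz]
  calc ENNReal.ofReal (2 * π) * volume W
      = ∫⁻ z, volume ({φ | rot φ z ∈ W} ∩ Ioc 0 (2 * π)) := by
        rw [lintegral_volume_setOf_mem_inter_Ioc (R := fun φ => rot φ)
          (continuous_planeRotation_uncurry u w).measurable (fun φ => (rot φ).measurePreserving)
          (measurableSet_closedBall.inter (measurableSet_wedge _ _)), sub_zero]
    _ ≤ ∫⁻ z, K.indicator (fun _ => ENNReal.ofReal θ) z := lintegral_mono hfiber
    _ = ENNReal.ofReal θ * volume K := lintegral_indicator_const measurableSet_closedBall _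


omit [MeasurableSpace F] [BorelSpace F] [FiniteDimensional ℝ F] in
lemma exists_orthonormal_eq_cos_smul_add_sin_smul {u v : F} (hu : ‖u‖ = 1) (hv : ‖v‖ = 1)
    (hlt : ⟪u, v⟫ < 1) (hgt : -1 < ⟪u, v⟫) :
    ∃ w : F, ‖w‖ = 1 ∧ ⟪u, w⟫ = 0 ∧
      v = cos (arccos ⟪u, v⟫) • u + sin (arccos ⟪u, v⟫) • w := by
  set θ := arccos ⟪u, v⟫
  have hcos : cos θ = ⟪u, v⟫ := cos_arccos hgt.le hlt.le
  have hsin : 0 < sin θ := sin_pos_of_pos_of_lt_pi (arccos_pos.2 hlt) (arccos_lt_pi.2 hgt)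
  have huu : ⟪u, u⟫ = 1 := by rw [real_inner_self_eq_norm_sq, hu, one_pow]
  have hvv : ⟪v, v⟫ = 1 := by rw [real_inner_self_eq_norm_sq, hv, one_pow]
  refine ⟨(sin θ)⁻¹ • (v - cos θ • u), ?_, ?_, ?_⟩
  · have hinner : ⟪v - cos θ • u, v - cos θ • u⟫ = sin θ ^ 2 := by
      simp only [inner_sub_left, inner_sub_right, real_inner_smul_left, real_inner_smul_right,
        huu, hvv, real_inner_comm u v, hcos]
      linear_combination (cos θ + ⟪u, v⟫) * hcos - sin_sq_add_cos_sq θ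
    rw [norm_smul, norm_eq_sqrt_real_inner (v - _), hinner, sqrt_sq hsin.le, norm_inv,
      norm_of_nonneg hsin.le, inv_mul_cancel₀ hsin.ne']
  · rw [real_inner_smul_right, inner_sub_right, real_inner_smul_right, huu, hcos, mul_one,
      sub_self, mul_zero]
  · rw [smul_smul, mul_inv_cancel₀ hsin.ne', one_smul, add_sub_cancel]

lemma two_mul_volume_closedBall_inter_wedge_neg_le (u : F) (ρ : ℝ) :
    2 * volume (Metric.closedBall (0 : F) ρ ∩ wedge u (-u)) ≤
      volume (Metric.closedBall (0 : F) ρ) := by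
  set S := Metric.closedBall (0 : F) ρ ∩ wedge u (-u)
  have hS : MeasurableSet S := measurableSet_closedBall.inter (measurableSet_wedge _ _)
  have hneg : MeasurePreserving (Neg.neg : F → F) :=
    (LinearIsometryEquiv.neg ℝ (E := F)).measurePreserving
  have hdisj : Disjoint S (Neg.neg ⁻¹' S) := by
    rw [disjoint_left]
    rintro z ⟨-, -, hpos⟩ ⟨-, hnonpos, -⟩
    rw [inner_neg_left] at hpos
    rw [inner_neg_right] at hnonpos
    linarith
  calc 2 * volume S = volume S + volume (Neg.neg ⁻¹' S) := by
        rw [two_mul, hneg.measure_preimage hS.nullMeasurableSet]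
    _ = volume (S ∪ Neg.neg ⁻¹' S) := (measure_union hdisj (hS.preimage measurable_neg)).symm
    _ ≤ volume (Metric.closedBall (0 : F) ρ) := by
        refine measure_mono (union_subset inter_subset_left fun z hz => ?_)
        simpa using hz.1

lemma two_pi_mul_volume_closedBall_inter_wedge_le {u v : F} (hu : ‖u‖ = 1) (hv : ‖v‖ = 1)
    (ρ : ℝ) :
    ENNReal.ofReal (2 * π) * volume (Metric.closedBall (0 : F) ρ ∩ wedge u v) ≤
      ENNReal.ofReal (arccos ⟪u, v⟫) * volume (Metric.closedBall (0 : F) ρ) := by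
  rcases (real_inner_le_one_of_norm_eq_one hu hv).eq_or_lt with h_one | hlt
  · obtain rfl := (inner_eq_one_iff_of_norm_eq_one hu hv).1 h_one
    have hempty : wedge u u = ∅ := eq_empty_of_forall_notMem fun z hz => hz.1.not_gt hz.2
    simp [hempty]
  rcases (neg_one_le_real_inner_of_norm_eq_one hu hv).eq_or_lt with h_neg_one | hgt
  · obtain rfl :=
      (inner_eq_neg_one_iff_of_norm_eq_one hv hu).1 (real_inner_comm u v ▸ h_neg_one.symm)
    rw [← h_neg_one, arccos_neg_one, ENNReal.ofReal_mul zero_le_two, ENNReal.ofReal_ofNat,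
      mul_comm 2, mul_assoc]
    gcongr
    exact two_mul_volume_closedBall_inter_wedge_neg_le u ρ
  obtain ⟨w, hw, huw, hv_eq⟩ := exists_orthonormal_eq_cos_smul_add_sin_smul hu hv hlt hgt
  conv_lhs => rw [hv_eq]
  exact two_pi_mul_volume_closedBall_inter_wedge_le_of_orthonormal hu hw huw (arccos_nonneg _) ρ

end Wedge

lemma withDensity_ofReal_apply_le {α : Type*} [MeasurableSpace α] (ν : Measure α) [SFinite ν]
    {f : α → ℝ} {M : ℝ} {K : Set α} (hK : MeasurableSet K) (hf_le : ∀ y, f y ≤ M)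
    (hf_supp : ∀ y ∉ K, f y = 0) (s : Set α) :
    ν.withDensity (fun y => ENNReal.ofReal (f y)) s ≤ ENNReal.ofReal M * ν (K ∩ s) := by
  have hf_le_indicator : ∀ y, ENNReal.ofReal (f y) ≤ K.indicator (fun _ => ENNReal.ofReal M) y := by
    intro y
    by_cases hy : y ∈ K
    · simpa [indicator_of_mem hy] using ENNReal.ofReal_le_ofReal (hf_le y)
    · simp [indicator_of_notMem hy, hf_supp y hy]
  calc ν.withDensity (fun y => ENNReal.ofReal (f y)) s
      = ∫⁻ y in s, ENNReal.ofReal (f y) ∂ν := withDensity_apply' _ s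
    _ ≤ ∫⁻ y in s, K.indicator (fun _ => ENNReal.ofReal M) y ∂ν := lintegral_mono hf_le_indicator
    _ = ENNReal.ofReal M * ν (K ∩ s) := by
        rw [lintegral_indicator_const hK, Measure.restrict_apply hK]

section Halfspace

variable {F : Type*} [NormedAddCommGroup F] [InnerProductSpace ℝ F] [MeasurableSpace F]
  [BorelSpace F] [FiniteDimensional ℝ F]

lemma volume_closedBall_inter_halfspace_sdiff (x p q : F) (r : ℝ) :
    volume (Metric.closedBall x r ∩ ({y | ⟪p, y⟫ ≤ ⟪p, x⟫} \ {y | ⟪q, y⟫ ≤ ⟪q, x⟫})) =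
      volume (Metric.closedBall (0 : F) r ∩ wedge p q) := by
  rw [← measure_preimage_add_right volume x]
  congr 1
  ext z
  simp [wedge, inner_add_right, dist_eq_norm]

lemma two_pi_mul_withDensity_halfspace_sdiff_le {f : F → ℝ} {M r : ℝ} {x : F}
    (hf_le : ∀ y, f y ≤ M) (hf_supp : ∀ y ∉ Metric.closedBall x r, f y = 0) {p q : F}
    (hp : ‖p‖ = 1) (hq : ‖q‖ = 1) :
    ENNReal.ofReal (2 * π) * volume.withDensity (fun y => ENNReal.ofReal (f y))
        ({y | ⟪p, y⟫ ≤ ⟪p, x⟫} \ {y | ⟪q, y⟫ ≤ ⟪q, x⟫}) ≤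
      ENNReal.ofReal M *
        (ENNReal.ofReal (arccos ⟪p, q⟫) * volume (Metric.closedBall (0 : F) r)) := by
  calc _ ≤ ENNReal.ofReal (2 * π) * (ENNReal.ofReal M * volume (Metric.closedBall x r ∩
          ({y | ⟪p, y⟫ ≤ ⟪p, x⟫} \ {y | ⟪q, y⟫ ≤ ⟪q, x⟫}))) := by
        gcongr
        exact withDensity_ofReal_apply_le _ measurableSet_closedBall hf_le hf_supp _
    _ = ENNReal.ofReal M * (ENNReal.ofReal (2 * π) *
          volume (Metric.closedBall (0 : F) r ∩ wedge p q)) := by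
        rw [volume_closedBall_inter_halfspace_sdiff, mul_left_comm]
    _ ≤ _ := mul_le_mul_right (two_pi_mul_volume_closedBall_inter_wedge_le hp hq r) _

end Halfspace

lemma toReal_volume_closedBall_euclideanSpace {d : ℕ} [NeZero d] (x : EuclideanSpace ℝ (Fin d))
    {r : ℝ} (hr : 0 ≤ r) :
    (volume (Metric.closedBall x r)).toReal = π ^ ((d : ℝ) / 2) * r ^ d / Gamma (d / 2 + 1) := by
  have hsqrt : √π ^ d = π ^ ((d : ℝ) / 2) := by
    rw [sqrt_eq_rpow, ← rpow_natCast, ← rpow_mul pi_nonneg, one_div_mul_eq_div]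
  rw [EuclideanSpace.volume_closedBall, Fintype.card_fin, ENNReal.toReal_mul, ENNReal.toReal_pow,
    ENNReal.toReal_ofReal hr, ENNReal.toReal_ofReal (by positivity), hsqrt, mul_div_assoc',
    mul_comm]

lemma measureReal_withDensity_halfspace_sdiff_le {d : ℕ} [NeZero d]
    {f : EuclideanSpace ℝ (Fin d) → ℝ} {M r : ℝ} (hM : 0 ≤ M) (hr : 0 ≤ r)
    {x : EuclideanSpace ℝ (Fin d)} (hf_le : ∀ y, f y ≤ M)
    (hf_supp : ∀ y ∉ Metric.closedBall x r, f y = 0) {p q : EuclideanSpace ℝ (Fin d)}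
    (hp : ‖p‖ = 1) (hq : ‖q‖ = 1) :
    (volume.withDensity fun y => ENNReal.ofReal (f y)).real
        ({y | ⟪p, y⟫ ≤ ⟪p, x⟫} \ {y | ⟪q, y⟫ ≤ ⟪q, x⟫}) ≤
      (M * π ^ ((d : ℝ) / 2 - 1) * r ^ d / Gamma ((d : ℝ) / 2 + 1)) * arccos ⟪p, q⟫ := by
  have h := ENNReal.toReal_mono (ENNReal.mul_ne_top ENNReal.ofReal_ne_top
    (ENNReal.mul_ne_top ENNReal.ofReal_ne_top measure_closedBall_lt_top.ne))
    (two_pi_mul_withDensity_halfspace_sdiff_le hf_le hf_supp hp hq)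
  simp only [ENNReal.toReal_mul, ENNReal.toReal_ofReal two_pi_pos.le, ENNReal.toReal_ofReal hM,
    ENNReal.toReal_ofReal (arccos_nonneg _), toReal_volume_closedBall_euclideanSpace 0 hr,
    ← measureReal_def] at h
  set m := (volume.withDensity fun y => ENNReal.ofReal (f y)).real
    ({y | ⟪p, y⟫ ≤ ⟪p, x⟫} \ {y | ⟪q, y⟫ ≤ ⟪q, x⟫})
  have hm : 0 ≤ π * m := mul_nonneg pi_pos.le measureReal_nonneg
  calc m ≤ M * (arccos ⟪p, q⟫ * (π ^ ((d : ℝ) / 2) * r ^ d / Gamma (d / 2 + 1))) / π := by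
        rw [le_div_iff₀ pi_pos]
        linarith
    _ = _ := by rw [rpow_sub_one pi_ne_zero]; ring

theorem stmt_17_general {d : ℕ} (M r : ℝ) (hM : 0 < M)
    (C : Set (EuclideanSpace ℝ (Fin d))) (hCb : Bornology.IsBounded C)
    (hr : Metric.diam C = r)
    (f : EuclideanSpace ℝ (Fin d) → ℝ)
    (hf_le : ∀ y, f y ≤ M) (hf_supp : ∀ y ∉ C, f y = 0)
    (μ : Measure (EuclideanSpace ℝ (Fin d)))
    (hμ : μ = volume.withDensity fun y => ENNReal.ofReal (f y))
    [IsProbabilityMeasure μ] :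
    ∀ x ∈ C, ∀ u v : EuclideanSpace ℝ (Fin d), ‖u‖ = 1 → ‖v‖ = 1 →
      |(μ {y | ⟪u, y⟫ ≤ ⟪u, x⟫}).toReal - (μ {y | ⟪v, y⟫ ≤ ⟪v, x⟫}).toReal| ≤
        (M * Real.pi ^ ((d : ℝ) / 2 - 1) * r ^ d / Real.Gamma ((d : ℝ) / 2 + 1)) *
          Real.arccos ⟪u, v⟫ := by
  intro x hx u v hu hv
  have : NeZero d := ⟨by rintro rfl; simp [Subsingleton.elim u 0] at hu⟩
  have hr0 : 0 ≤ r := hr ▸ Metric.diam_nonneg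
  have hsupp : ∀ y ∉ Metric.closedBall x r, f y = 0 := fun y hy => hf_supp y fun hyC =>
    hy (Metric.mem_closedBall.2 (hr ▸ Metric.dist_le_diam_of_mem hCb hyC hx))
  have hone_sided := fun {p q} (hp : ‖p‖ = 1) (hq : ‖q‖ = 1) =>
    hμ ▸ measureReal_withDensity_halfspace_sdiff_le hM.le hr0 hf_le hsupp hp hq
  rw [abs_sub_le_iff]
  exact ⟨(le_measureReal_sdiff).trans (hone_sided hu hv),
    (le_measureReal_sdiff).trans (real_inner_comm u v ▸ hone_sided hv hu)⟩

theorem stmt_17 {d : ℕ} (M r : ℝ) (hM : 0 < M)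
    (C : Set (EuclideanSpace ℝ (Fin d))) (hCb : Bornology.IsBounded C)
    (hr : Metric.diam C = r)
    (f : EuclideanSpace ℝ (Fin d) → ℝ) (hf_nn : ∀ y, 0 ≤ f y)
    (hf_le : ∀ y, f y ≤ M) (hf_supp : ∀ y ∉ C, f y = 0)
    (μ : Measure (EuclideanSpace ℝ (Fin d)))
    (hμ : μ = volume.withDensity fun y => ENNReal.ofReal (f y))
    [IsProbabilityMeasure μ] :
    ∀ x ∈ C, ∀ u v : EuclideanSpace ℝ (Fin d), ‖u‖ = 1 → ‖v‖ = 1 →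
      |(μ {y | ⟪u, y⟫ ≤ ⟪u, x⟫}).toReal - (μ {y | ⟪v, y⟫ ≤ ⟪v, x⟫}).toReal| ≤
        (M * Real.pi ^ ((d : ℝ) / 2 - 1) * r ^ d / Real.Gamma ((d : ℝ) / 2 + 1)) *
          Real.arccos ⟪u, v⟫ :=
  stmt_17_general M r hM C hCb hr f hf_le hf_supp μ hμ
end
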